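/- For every simplicial complex X with at least one facet, L(X) ≤ M(X), where M(X) is the minimum over all linear orderings σ_1 ≺ ⋯ ≺ σ_m of the facets of X of the quantity M_≺(X) defined by M_≺(X_1) = 1 and M_≺(X_j) = M_≺(X_{j-1}) if X_{j-1} ∩ Δ(σ_j) is a simplex and M_≺(X_j) = M_≺(X_{j-1}) + 1 otherwise, with X_j = ∪_{i=1}^{j} Δ(σ_i). -/

import Mathlib

open Finset

variable {V : Type*} [DecidableEq V] [Fintype V]

/-- An abstract simplicial complex: a finite collection of faces closed under subsets. -/
def IsComplex (X : Finset (Finset V)) : Prop :=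
  ∀ s ∈ X, ∀ t, t ⊆ s → t ∈ X

/-- A collection of faces is a simplex if it is the full power set of some vertex set
(possibly empty). -/
def IsSimplexC (Y : Finset (Finset V)) : Prop := ∃ τ : Finset V, Y = τ.powerset

/-- The induced subcomplex `X[W]`. -/
def indOn (X : Finset (Finset V)) (W : Finset V) : Finset (Finset V) :=
  X.filter (fun s => s ⊆ W)

/-- The `ℤ/2ℤ` boundary of a chain, a chain being recorded as the finite set of faces with
coefficient `1`.  The coefficient of `τ` in `∂ c` is the parity of the number of faces of `c`
covering `τ`.  (This includes the augmentation `∂₀`, with `∅` playing the role of the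
generator of `C₋₁`, so homology is reduced homology.) -/
def bdry (c : Finset (Finset V)) : Finset (Finset V) :=
  Finset.univ.filter (fun τ => Odd (c.filter (fun s => τ ⊆ s ∧ s.card = τ.card + 1)).card)

/-- Sum of chains over `ℤ/2ℤ` (symmetric difference). -/
def chAdd (c d : Finset (Finset V)) : Finset (Finset V) := (c \ d) ∪ (d \ c)

/-- An `n`-dimensional chain of `X` (each face has `n+1` vertices). -/
def IsNChain (X : Finset (Finset V)) (n : ℕ) (c : Finset (Finset V)) : Prop :=
  c ⊆ X ∧ ∀ s ∈ c, s.card = n + 1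

/-- An `n`-cycle of `X` (reduced: `0`-cycles have evenly many vertices). -/
def IsNCycle (X : Finset (Finset V)) (n : ℕ) (c : Finset (Finset V)) : Prop :=
  IsNChain X n c ∧ bdry c = ∅

/-- An `n`-boundary of `X`. -/
def IsNBdry (X : Finset (Finset V)) (n : ℕ) (c : Finset (Finset V)) : Prop :=
  ∃ d, IsNChain X (n + 1) d ∧ bdry d = c

/-- `X` is `d`-Leray: all reduced homology of induced subcomplexes vanishes in
dimensions `≥ d`. -/
def IsLeray (X : Finset (Finset V)) (d : ℕ) : Prop :=
  ∀ W : Finset V, ∀ i : ℕ, d ≤ i → ∀ c,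
    IsNCycle (indOn X W) i c → IsNBdry (indOn X W) i c

/-- The Leray number `L(X)`. -/
noncomputable def lerayNum (X : Finset (Finset V)) : ℕ := sInf {d | IsLeray X d}

/-- The facets (maximal faces) of `X`. -/
def facetsOf (X : Finset (Finset V)) : Finset (Finset V) :=
  X.filter (fun s => ∀ t ∈ X, s ⊆ t → s = t)

/-- `σ 0, …, σ (m-1)` is an enumeration (linear ordering) of the facets of `X`. -/
def IsFacetEnum (X : Finset (Finset V)) (m : ℕ) (σ : ℕ → Finset V) : Prop :=
  (∀ i, i < m → σ i ∈ facetsOf X) ∧ (∀ s ∈ facetsOf X, ∃ i, i < m ∧ σ i = s) ∧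
    (∀ i j, i < m → j < m → σ i = σ j → i = j)

/-- `X_j = ⋃_{i < j} Δ(σ i)`. -/
def cUnion (σ : ℕ → Finset V) (j : ℕ) : Finset (Finset V) :=
  (Finset.range j).biUnion (fun i => (σ i).powerset)

-- `Mval σ j = M_≺(X_{j+1})`: starts at `1`, increases by `1` exactly when the newly
-- attached simplex meets the union of the previous ones in a non-simplex.
open Classical in
noncomputable def Mval (σ : ℕ → Finset V) : ℕ → ℕ
  | 0 => 1
  | (j+1) => Mval σ j + (if IsSimplexC (cUnion σ (j+1) ∩ (σ (j+1)).powerset) then 0 else 1)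

/-- `M(X)`: the minimum of `M_≺(X)` over all facet orderings. -/
noncomputable def Mnum (X : Finset (Finset V)) : ℕ :=
  sInf {k | ∃ m σ, 0 < m ∧ IsFacetEnum X m σ ∧ k = Mval σ (m - 1)}

/-- The facet ordering `σ 0 ≺ ⋯ ≺ σ (m-1)` is a weak shelling. -/
def IsWeakShelling (σ : ℕ → Finset V) (m : ℕ) : Prop :=
  ∀ j, 1 ≤ j → j < m → ∃ u ∈ σ j, IsSimplexC (indOn (cUnion σ j) ((σ j).erase u))

/-- `c` is the edge set of a cycle (graph cycle, length `≥ 3`). -/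
def IsCycleEdges (c : Finset (Finset V)) : Prop :=
  ∃ n : ℕ, 3 ≤ n ∧ ∃ f : ℕ → V, (∀ i j, i < n → j < n → f i = f j → i = j) ∧
    c = (Finset.range n).image (fun i => ({f i, f ((i + 1) % n)} : Finset V))



set_option linter.unusedSectionVars false

lemma mem_bdry {c : Finset (Finset V)} {τ : Finset V} :
    τ ∈ bdry c ↔ Odd (c.filter (fun s => τ ⊆ s ∧ s.card = τ.card + 1)).card := by
  simp [bdry]

lemma bdry_empty : bdry (∅ : Finset (Finset V)) = ∅ := by
  ext τ; simp [mem_bdry]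

lemma exists_eq_insert_of_card_succ {ρ τ : Finset V} (h : ρ ⊆ τ) (hc : τ.card = ρ.card + 1) :
    ∃ v, v ∉ ρ ∧ v ∈ τ ∧ τ = insert v ρ := by
  have h1 : (τ \ ρ).card = 1 := by rw [card_sdiff_of_subset h]; omega
  obtain ⟨v, hv⟩ := card_eq_one.mp h1
  have hvτ : v ∈ τ \ ρ := by rw [hv]; simp
  refine ⟨v, (mem_sdiff.mp hvτ).2, (mem_sdiff.mp hvτ).1, ?_⟩
  have := union_sdiff_of_subset h
  rw [hv] at this
  rw [← this, union_comm]; exact (insert_eq v ρ).symm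

lemma parity_card_filter_odd {α : Type*} [DecidableEq α] (s : Finset α) (f : α → ℕ) :
    (s.filter (fun x => Odd (f x))).card % 2 = (∑ x ∈ s, f x) % 2 := by
  induction s using Finset.induction_on with
  | empty => simp
  | insert a s ha ih =>
    rw [filter_insert, sum_insert ha]
    by_cases h : Odd (f a)
    · rw [if_pos h, card_insert_of_notMem (by simp [ha])]
      rw [Nat.odd_iff] at h; omega
    · rw [if_neg h]
      rw [Nat.odd_iff] at h; push_neg at h
      have h2 : f a % 2 = 0 := by omega
      omega

lemma even_interval_card (ρ s : Finset V) :
    Even ((univ.filter (fun τ : Finset V => (ρ ⊆ τ ∧ τ.card = ρ.card + 1) ∧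
      τ ⊆ s ∧ s.card = τ.card + 1)).card) := by
  by_cases h : ρ ⊆ s ∧ s.card = ρ.card + 2
  · have he : (univ.filter (fun τ : Finset V => (ρ ⊆ τ ∧ τ.card = ρ.card + 1) ∧
        τ ⊆ s ∧ s.card = τ.card + 1)) = (s \ ρ).image (fun v => insert v ρ) := by
      ext τ
      simp only [mem_filter, mem_univ, true_and, mem_image, mem_sdiff]
      constructor
      · rintro ⟨⟨h1, h2⟩, h3, h4⟩
        obtain ⟨v, hv1, hv2, hv3⟩ := exists_eq_insert_of_card_succ h1 h2
        exact ⟨v, ⟨h3 hv2, hv1⟩, hv3.symm⟩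
      · rintro ⟨v, ⟨hvs, hvρ⟩, rfl⟩
        refine ⟨⟨subset_insert _ _, card_insert_of_notMem hvρ⟩, ?_, ?_⟩
        · exact insert_subset hvs h.1
        · rw [card_insert_of_notMem hvρ]; omega
    rw [he, card_image_of_injOn, card_sdiff_of_subset h.1]
    · rw [h.2]; exact ⟨1, by omega⟩
    · intro x hx y hy hxy
      simp only at hxy
      have : x ∈ insert y ρ := by rw [← hxy]; exact mem_insert_self x ρ
      rcases mem_insert.mp this with h' | h'
      · exact h'
      · exact absurd h' (mem_sdiff.mp hx).2

  · convert (Nat.even_iff.mpr rfl : Even (0 : ℕ)) using 2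
    rw [card_eq_zero, filter_eq_empty_iff]
    rintro τ _ ⟨⟨h1, h2⟩, h3, h4⟩
    exact h ⟨h1.trans h3, by omega⟩

lemma bdry_bdry (c : Finset (Finset V)) : bdry (bdry c) = ∅ := by
  ext ρ
  simp only [mem_bdry, notMem_empty, iff_false]
  rw [Nat.odd_iff]
  intro hodd
  have key : ((bdry c).filter (fun τ => ρ ⊆ τ ∧ τ.card = ρ.card + 1)).card % 2
      = (∑ τ ∈ univ.filter (fun τ : Finset V => ρ ⊆ τ ∧ τ.card = ρ.card + 1),
          (c.filter (fun s => τ ⊆ s ∧ s.card = τ.card + 1)).card) % 2 := by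
    rw [← parity_card_filter_odd]
    congr 2
    rw [bdry, filter_filter, filter_filter]
    congr 1
    ext τ; tauto
  rw [key] at hodd
  have : ∀ τ ∈ univ.filter (fun τ : Finset V => ρ ⊆ τ ∧ τ.card = ρ.card + 1),
      (c.filter (fun s => τ ⊆ s ∧ s.card = τ.card + 1)).card
      = ∑ s ∈ c, if τ ⊆ s ∧ s.card = τ.card + 1 then 1 else 0 := by
    intro τ _; rw [Finset.card_filter]
  rw [Finset.sum_congr rfl this, Finset.sum_comm] at hodd
  have : ∀ s ∈ c, (∑ τ ∈ univ.filter (fun τ : Finset V => ρ ⊆ τ ∧ τ.card = ρ.card + 1),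
      if τ ⊆ s ∧ s.card = τ.card + 1 then 1 else 0) % 2 = 0 := by
    intro s _
    rw [← Finset.card_filter, filter_filter]
    have := even_interval_card ρ s
    rw [Nat.even_iff] at this
    convert this using 3
  rw [Finset.sum_nat_mod, Finset.sum_congr rfl this] at hodd
  simp at hodd

lemma mem_chAdd {c d : Finset (Finset V)} {s : Finset V} :
    s ∈ chAdd c d ↔ (s ∈ c ∧ s ∉ d) ∨ (s ∈ d ∧ s ∉ c) := by
  simp [chAdd]

lemma chAdd_cancel (a b e : Finset (Finset V)) : chAdd (chAdd a e) (chAdd b e) = chAdd a b := by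
  ext s; simp only [mem_chAdd]; tauto

lemma chAdd_self (a : Finset (Finset V)) : chAdd a a = ∅ := by
  ext s; simp [mem_chAdd]

lemma chAdd_empty (a : Finset (Finset V)) : chAdd a ∅ = a := by
  ext s; simp [mem_chAdd]

lemma card_chAdd_parity {α : Type*} [DecidableEq α] (c d : Finset α) :
    ((c \ d) ∪ (d \ c)).card % 2 = (c.card + d.card) % 2 := by
  rw [card_union_of_disjoint (disjoint_sdiff_sdiff)]
  have h1 := card_sdiff_add_card_inter c d
  have h2 := card_sdiff_add_card_inter d c
  rw [inter_comm] at h2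
  omega

lemma bdry_chAdd (c d : Finset (Finset V)) : bdry (chAdd c d) = chAdd (bdry c) (bdry d) := by
  ext τ
  simp only [chAdd, mem_union, mem_sdiff, mem_bdry]
  have hfe : (((c \ d) ∪ (d \ c)).filter (fun s => τ ⊆ s ∧ s.card = τ.card + 1))
      = ((c.filter (fun s => τ ⊆ s ∧ s.card = τ.card + 1)) \ (d.filter (fun s => τ ⊆ s ∧ s.card = τ.card + 1)))
        ∪ ((d.filter (fun s => τ ⊆ s ∧ s.card = τ.card + 1)) \ (c.filter (fun s => τ ⊆ s ∧ s.card = τ.card + 1))) := by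
    ext s; simp only [mem_filter, mem_union, mem_sdiff]; tauto
  rw [hfe]
  rw [Nat.odd_iff, card_chAdd_parity, Nat.odd_iff, Nat.odd_iff]
  omega

lemma bdry_subsets {c : Finset (Finset V)} {τ : Finset V} (h : τ ∈ bdry c) :
    ∃ s ∈ c, τ ⊆ s ∧ s.card = τ.card + 1 := by
  rw [mem_bdry] at h
  have : (c.filter (fun s => τ ⊆ s ∧ s.card = τ.card + 1)).Nonempty := by
    rw [← card_pos]; exact h.pos
  obtain ⟨s, hs⟩ := this
  rw [mem_filter] at hs
  exact ⟨s, hs.1, hs.2⟩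

lemma bdry_cone {c : Finset (Finset V)} {n : ℕ} (v : V)
    (hcard : ∀ s ∈ c, s.card = n + 1) (hcyc : bdry c = ∅) :
    bdry ((c.filter (fun s => v ∉ s)).image (insert v)) = c := by
  ext ρ
  rw [mem_bdry]
  have himg : (((c.filter (fun s => v ∉ s)).image (insert v)).filter
      (fun s' => ρ ⊆ s' ∧ s'.card = ρ.card + 1))
      = ((c.filter (fun s => v ∉ s)).filter (fun s => ρ ⊆ insert v s ∧ (insert v s).card = ρ.card + 1)).image (insert v) := by
    rw [Finset.filter_image]
  have hinj : Set.InjOn (insert v) ((c.filter (fun s => v ∉ s) : Finset (Finset V)) : Set (Finset V)) := by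
    intro x hx y hy hxy
    simp only [coe_filter, Set.mem_setOf_eq] at hx hy
    ext a
    constructor <;> intro ha
    · have : a ∈ insert v y := by rw [← hxy]; exact mem_insert_of_mem ha
      rcases mem_insert.mp this with h' | h'
      · exact absurd (h' ▸ ha) hx.2
      · exact h'
    · have : a ∈ insert v x := by rw [hxy]; exact mem_insert_of_mem ha
      rcases mem_insert.mp this with h' | h'
      · exact absurd (h' ▸ ha) hy.2
      · exact h'
  rw [himg, card_image_of_injOn (hinj.mono (coe_subset.mpr (filter_subset _ _))), filter_filter]
  by_cases hv : v ∈ ρ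
  · -- count s ∈ c with v ∉ s and erase v ρ ⊆ s and card condition
    have hsplit : ∀ s, s ∈ c → ((v ∉ s ∧ ρ ⊆ insert v s ∧ (insert v s).card = ρ.card + 1)
        ↔ (v ∉ s ∧ ρ.erase v ⊆ s ∧ ρ.card = n + 1)) := by
      intro s hs
      constructor
      · rintro ⟨h1, h2, h3⟩
        rw [card_insert_of_notMem h1, hcard s hs] at h3
        refine ⟨h1, ?_, by omega⟩
        intro a ha
        have := h2 (mem_erase.mp ha).2
        rcases mem_insert.mp this with h' | h'
        · exact absurd h' (mem_erase.mp ha).1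
        · exact h'
      · rintro ⟨h1, h2, h3⟩
        refine ⟨h1, ?_, ?_⟩
        · intro a ha
          by_cases hav : a = v
          · exact hav ▸ mem_insert_self v s
          · exact mem_insert_of_mem (h2 (mem_erase.mpr ⟨hav, ha⟩))
        · rw [card_insert_of_notMem h1, hcard s hs]; omega
    rw [filter_congr hsplit]
    by_cases hρc : ρ.card = n + 1
    · -- use the cycle condition at ρ.erase v
      have hz : ¬ Odd ((c.filter (fun s => ρ.erase v ⊆ s ∧ s.card = (ρ.erase v).card + 1)).card) := by
        have : ρ.erase v ∉ bdry c := by rw [hcyc]; exact notMem_empty _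
        rwa [mem_bdry] at this
      have hcards : (ρ.erase v).card + 1 = n + 1 := by
        rw [card_erase_of_mem hv]; omega
      have hsp : (c.filter (fun s => ρ.erase v ⊆ s ∧ s.card = (ρ.erase v).card + 1))
          = (c.filter (fun s => v ∉ s ∧ ρ.erase v ⊆ s ∧ ρ.card = n + 1))
            ∪ (c.filter (fun s => v ∈ s ∧ ρ.erase v ⊆ s)) := by
        ext s
        simp only [mem_filter, mem_union]
        constructor
        · rintro ⟨hs, h1, h2⟩
          by_cases hvs : v ∈ s
          · exact Or.inr ⟨hs, hvs, h1⟩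
          · exact Or.inl ⟨hs, hvs, h1, hρc⟩
        · rintro (⟨hs, h1, h2, h3⟩ | ⟨hs, h1, h2⟩) <;>
            exact ⟨hs, by tauto, by rw [hcard s hs]; omega⟩
      have hdisj : Disjoint (c.filter (fun s => v ∉ s ∧ ρ.erase v ⊆ s ∧ ρ.card = n + 1))
          (c.filter (fun s => v ∈ s ∧ ρ.erase v ⊆ s)) := by
        rw [Finset.disjoint_left]
        intro s hs1 hs2
        rw [mem_filter] at hs1 hs2
        tauto
      have hsecond : (c.filter (fun s => v ∈ s ∧ ρ.erase v ⊆ s)) = if ρ ∈ c then {ρ} else ∅ := by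
        ext s
        simp only [mem_filter]
        constructor
        · rintro ⟨hs, h1, h2⟩
          have hρs : ρ ⊆ s := by
            intro a ha
            by_cases hav : a = v
            · exact hav ▸ h1
            · exact h2 (mem_erase.mpr ⟨hav, ha⟩)
          have : s = ρ := (eq_of_subset_of_card_le hρs (by rw [hcard s hs]; omega)).symm
          subst this
          simp [hs]
        · intro hs
          by_cases hρ : ρ ∈ c
          · rw [if_pos hρ, mem_singleton] at hs
            subst hs
            exact ⟨hρ, hv, erase_subset _ _⟩
          · rw [if_neg hρ] at hs; exact absurd hs (notMem_empty _)
      rw [hsp, card_union_of_disjoint hdisj, hsecond] at hz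
      by_cases hρ : ρ ∈ c
      · rw [if_pos hρ] at hz
        simp only [card_singleton] at hz
        rw [Nat.odd_iff] at hz ⊢
        push_neg at hz
        simp only [hρ, iff_true]
        omega
      · rw [if_neg hρ] at hz
        simp only [card_empty, Nat.add_zero] at hz
        simp only [hρ, iff_false]
        exact hz
    · -- ρ.card ≠ n+1 : filter empty and ρ ∉ c
      have : (c.filter (fun s => v ∉ s ∧ ρ.erase v ⊆ s ∧ ρ.card = n + 1)) = ∅ := by
        rw [filter_eq_empty_iff]; tauto
      rw [this]
      simp only [card_empty]
      constructor
      · intro h; exact absurd h (by decide)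
      · intro h; exact absurd (hcard ρ h) hρc
  · -- v ∉ ρ: the only candidate is s = ρ
    have : (c.filter (fun s => v ∉ s ∧ ρ ⊆ insert v s ∧ (insert v s).card = ρ.card + 1))
        = if ρ ∈ c ∧ v ∉ ρ then {ρ} else ∅ := by
      ext s
      simp only [mem_filter]
      constructor
      · rintro ⟨hs, h1, h2, h3⟩
        have hρs : ρ ⊆ s := by
          intro a ha
          rcases mem_insert.mp (h2 ha) with h' | h'
          · exact absurd (h' ▸ ha) hv
          · exact h'
        rw [card_insert_of_notMem h1, hcard s hs] at h3
        have : s = ρ := (eq_of_subset_of_card_le hρs (by rw [hcard s hs]; omega)).symm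
        subst this
        simp [hs, hv]
      · intro hs
        by_cases hρ : ρ ∈ c ∧ v ∉ ρ
        · rw [if_pos hρ, mem_singleton] at hs
          subst hs
          refine ⟨hρ.1, hρ.2, subset_insert _ _, ?_⟩
          rw [card_insert_of_notMem hρ.2]
        · rw [if_neg hρ] at hs; exact absurd hs (notMem_empty _)
    rw [this]
    by_cases hρ : ρ ∈ c
    · rw [if_pos ⟨hρ, hv⟩]; simp [hρ]
    · rw [if_neg (by tauto)]
      simp [hρ]

lemma simplex_acyclic (τ : Finset V) (n : ℕ) (c : Finset (Finset V))
    (hc : IsNCycle (τ.powerset) n c) : IsNBdry (τ.powerset) n c := by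
  rcases eq_or_ne c ∅ with rfl | hne
  · exact ⟨∅, ⟨empty_subset _, by simp⟩, bdry_empty⟩
  · obtain ⟨s, hs⟩ := nonempty_iff_ne_empty.mpr hne
    have hsτ : s ⊆ τ := mem_powerset.mp (hc.1.1 hs)
    have hscard : s.card = n + 1 := hc.1.2 s hs
    have : s.Nonempty := by rw [← card_pos, hscard]; omega
    obtain ⟨v, hv⟩ := this
    have hvτ : v ∈ τ := hsτ hv
    refine ⟨(c.filter (fun s => v ∉ s)).image (insert v), ⟨?_, ?_⟩, bdry_cone v hc.1.2 hc.2⟩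
    · intro t ht
      obtain ⟨u, hu, rfl⟩ := mem_image.mp ht
      rw [mem_filter] at hu
      exact mem_powerset.mpr (insert_subset hvτ (mem_powerset.mp (hc.1.1 hu.1)))
    · intro t ht
      obtain ⟨u, hu, rfl⟩ := mem_image.mp ht
      rw [mem_filter] at hu
      rw [card_insert_of_notMem hu.2, hc.1.2 u hu.1]

lemma mv_glue (A B : Finset (Finset V)) (hA : IsComplex A) (hB : IsComplex B) (n : ℕ)
    (hn : 1 ≤ n)
    (hAc : ∀ c, IsNCycle A n c → IsNBdry A n c)
    (hBc : ∀ c, IsNCycle B n c → IsNBdry B n c)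
    (hIc : ∀ c, IsNCycle (A ∩ B) (n - 1) c → IsNBdry (A ∩ B) (n - 1) c) :
    ∀ c, IsNCycle (A ∪ B) n c → IsNBdry (A ∪ B) n c := by
  intro c hc
  set a := c.filter (fun s => s ∈ A) with ha_def
  set b := c.filter (fun s => s ∉ A) with hb_def
  have hab : chAdd a b = c := by
    ext s
    simp only [mem_chAdd, ha_def, hb_def, mem_filter]
    tauto
  have haA : a ⊆ A := fun s hs => (mem_filter.mp hs).2
  have hbB : b ⊆ B := by
    intro s hs
    rw [hb_def, mem_filter] at hs
    rcases mem_union.mp (hc.1.1 hs.1) with h | h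
    · exact absurd h hs.2
    · exact h
  have hacard : ∀ s ∈ a, s.card = n + 1 := fun s hs => hc.1.2 s (mem_filter.mp hs).1
  have hbcard : ∀ s ∈ b, s.card = n + 1 := fun s hs => hc.1.2 s (mem_filter.mp hs).1
  -- ∂a = ∂b, and it is a cycle of A ∩ B in dim n-1
  have hbd_eq : bdry a = bdry b := by
    have h1 : chAdd (bdry a) (bdry b) = ∅ := by
      rw [← bdry_chAdd, hab, hc.2]
    ext τ
    by_contra hne
    have : τ ∈ chAdd (bdry a) (bdry b) := by
      rw [mem_chAdd]; tauto
    rw [h1] at this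
    exact notMem_empty _ this
  have hbd_card : ∀ τ ∈ bdry a, τ.card = (n - 1) + 1 := by
    intro τ hτ
    obtain ⟨s, hs, _, hcard⟩ := bdry_subsets hτ
    have := hacard s hs
    omega
  have hbd_sub : bdry a ⊆ A ∩ B := by
    intro τ hτ
    rw [mem_inter]
    constructor
    · obtain ⟨s, hs, hsub, _⟩ := bdry_subsets hτ
      exact hA s (haA hs) τ hsub
    · rw [hbd_eq] at hτ
      obtain ⟨s, hs, hsub, _⟩ := bdry_subsets hτ
      exact hB s (hbB hs) τ hsub
  have hbd_cyc : IsNCycle (A ∩ B) (n - 1) (bdry a) :=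
    ⟨⟨hbd_sub, hbd_card⟩, bdry_bdry a⟩
  obtain ⟨e, he_chain, he_bd⟩ := hIc (bdry a) hbd_cyc
  have hen : (n - 1) + 1 = n := by omega
  have he_cardn : ∀ s ∈ e, s.card = n + 1 := by
    intro s hs
    have := he_chain.2 s hs
    omega
  -- a + e is a cycle of A
  have hae : IsNCycle A n (chAdd a e) := by
    refine ⟨⟨?_, ?_⟩, ?_⟩
    · intro s hs
      rcases mem_chAdd.mp hs with ⟨h1, _⟩ | ⟨h1, _⟩
      · exact haA h1
      · exact (mem_inter.mp (he_chain.1 h1)).1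
    · intro s hs
      rcases mem_chAdd.mp hs with ⟨h1, _⟩ | ⟨h1, _⟩
      · exact hacard s h1
      · exact he_cardn s h1
    · rw [bdry_chAdd, he_bd, chAdd_self]
  have hbe : IsNCycle B n (chAdd b e) := by
    refine ⟨⟨?_, ?_⟩, ?_⟩
    · intro s hs
      rcases mem_chAdd.mp hs with ⟨h1, _⟩ | ⟨h1, _⟩
      · exact hbB h1
      · exact (mem_inter.mp (he_chain.1 h1)).2
    · intro s hs
      rcases mem_chAdd.mp hs with ⟨h1, _⟩ | ⟨h1, _⟩
      · exact hbcard s h1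
      · exact he_cardn s h1
    · rw [bdry_chAdd, he_bd, ← hbd_eq, chAdd_self]
  obtain ⟨f, hf_chain, hf_bd⟩ := hAc (chAdd a e) hae
  obtain ⟨g, hg_chain, hg_bd⟩ := hBc (chAdd b e) hbe
  refine ⟨chAdd f g, ⟨?_, ?_⟩, ?_⟩
  · intro s hs
    rcases mem_chAdd.mp hs with ⟨h1, _⟩ | ⟨h1, _⟩
    · exact mem_union_left _ (hf_chain.1 h1)
    · exact mem_union_right _ (hg_chain.1 h1)
  · intro s hs
    rcases mem_chAdd.mp hs with ⟨h1, _⟩ | ⟨h1, _⟩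
    · exact hf_chain.2 s h1
    · exact hg_chain.2 s h1
  · rw [bdry_chAdd, hf_bd, hg_bd, chAdd_cancel, hab]

lemma indOn_union (A B : Finset (Finset V)) (W : Finset V) :
    indOn (A ∪ B) W = indOn A W ∪ indOn B W := by
  ext s; simp only [indOn, mem_filter, mem_union]; tauto

lemma indOn_inter (A B : Finset (Finset V)) (W : Finset V) :
    indOn (A ∩ B) W = indOn A W ∩ indOn B W := by
  ext s; simp only [indOn, mem_filter, mem_inter]; tauto

lemma indOn_indOn (A : Finset (Finset V)) (U W : Finset V) :
    indOn (indOn A U) W = indOn A (U ∩ W) := by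
  ext s
  simp only [indOn, mem_filter, subset_inter_iff]
  tauto

lemma indOn_powerset (τ W : Finset V) : indOn (τ.powerset) W = (τ ∩ W).powerset := by
  ext s
  simp only [indOn, mem_filter, mem_powerset, subset_inter_iff]

lemma isComplex_indOn {A : Finset (Finset V)} (hA : IsComplex A) (W : Finset V) :
    IsComplex (indOn A W) := by
  intro s hs t hts
  rw [indOn, mem_filter] at hs ⊢
  exact ⟨hA s hs.1 t hts, hts.trans hs.2⟩

lemma isComplex_cUnion (σ : ℕ → Finset V) (j : ℕ) : IsComplex (cUnion σ j) := by
  intro s hs t hts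
  rw [cUnion, mem_biUnion] at hs ⊢
  obtain ⟨i, hi, hsi⟩ := hs
  exact ⟨i, hi, mem_powerset.mpr (hts.trans (mem_powerset.mp hsi))⟩

lemma isLeray_mono {X : Finset (Finset V)} {d d' : ℕ} (h : d ≤ d') (hX : IsLeray X d) :
    IsLeray X d' := fun W i hi => hX W i (h.trans hi)

lemma isLeray_powerset (τ : Finset V) (d : ℕ) : IsLeray (τ.powerset) d := by
  intro W i _ c hc
  rw [indOn_powerset] at hc ⊢
  exact simplex_acyclic _ _ _ hc

lemma isLeray_indOn {X : Finset (Finset V)} {d : ℕ} (hX : IsLeray X d) (U : Finset V) :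
    IsLeray (indOn X U) d := by
  intro W i hi c hc
  rw [indOn_indOn] at hc ⊢
  exact hX (U ∩ W) i hi c hc

lemma Mval_pos (σ : ℕ → Finset V) (j : ℕ) : 1 ≤ Mval σ j := by
  induction j with
  | zero => simp [Mval]
  | succ j ih => rw [Mval]; omega

lemma cUnion_one (σ : ℕ → Finset V) : cUnion σ 1 = (σ 0).powerset := by
  simp [cUnion]

lemma cUnion_succ (σ : ℕ → Finset V) (j : ℕ) :
    cUnion σ (j + 1) = cUnion σ j ∪ (σ j).powerset := by
  rw [cUnion, cUnion, range_add_one, biUnion_insert, union_comm]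

lemma inter_powerset_eq_indOn (A : Finset (Finset V)) (τ : Finset V) :
    A ∩ τ.powerset = indOn A τ := by
  ext s
  simp only [mem_inter, mem_powerset, indOn, mem_filter]

lemma leray_cUnion (σ : ℕ → Finset V) : ∀ j, IsLeray (cUnion σ (j + 1)) (Mval σ j) := by
  intro j
  induction j with
  | zero =>
    rw [cUnion_one]
    exact isLeray_powerset _ _
  | succ j ih =>
    set A := cUnion σ (j + 1) with hA_def
    set B := (σ (j + 1)).powerset with hB_def
    have hU : cUnion σ (j + 2) = A ∪ B := cUnion_succ σ (j + 1)
    have hIA : A ∩ B = indOn A (σ (j + 1)) := inter_powerset_eq_indOn A (σ (j + 1))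
    have hML : IsLeray (A ∩ B) (Mval σ j) := by
      rw [hIA]; exact isLeray_indOn ih _
    have key : ∀ d : ℕ, Mval σ j ≤ d → IsLeray (A ∩ B) (d - 1) → IsLeray (cUnion σ (j+2)) d := by
      intro d hd hABL
      intro W i hi c hc
      rw [hU, indOn_union] at hc ⊢
      have hn1 : 1 ≤ i := le_trans (Mval_pos σ j) (le_trans hd hi)
      refine mv_glue (indOn A W) (indOn B W) (isComplex_indOn (isComplex_cUnion σ _) W)
        (isComplex_indOn (fun s hs t hts => mem_powerset.mpr (hts.trans (mem_powerset.mp hs))) W)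
        i hn1 ?_ ?_ ?_ c hc
      · exact fun c' hc' => ih W i (le_trans hd hi) c' hc'
      · intro c' hc'
        rw [hB_def, indOn_powerset] at hc' ⊢
        exact simplex_acyclic _ _ _ hc'
      · intro c' hc'
        rw [← indOn_inter] at hc' ⊢
        exact hABL W (i - 1) (by omega) c' hc'
    rw [Mval]
    by_cases hS : IsSimplexC (cUnion σ (j+1) ∩ (σ (j+1)).powerset)
    · rw [if_pos hS]
      refine key (Mval σ j + 0) (by omega) ?_
      obtain ⟨τ, hτ⟩ := hS
      have : A ∩ B = τ.powerset := hτ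
      intro W i hi c hc
      rw [this, indOn_powerset] at hc ⊢
      exact simplex_acyclic _ _ _ hc
    · rw [if_neg hS]
      refine key (Mval σ j + 1) (by omega) ?_
      have : Mval σ j + 1 - 1 = Mval σ j := by omega
      rw [this]
      exact hML

lemma exists_facet {X : Finset (Finset V)} {s : Finset V} (hs : s ∈ X) :
    ∃ t ∈ facetsOf X, s ⊆ t := by
  obtain ⟨t, ht, hmax⟩ := Finset.exists_max_image (X.filter (fun u => s ⊆ u)) Finset.card
    ⟨s, mem_filter.mpr ⟨hs, subset_rfl⟩⟩
  rw [mem_filter] at ht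
  refine ⟨t, mem_filter.mpr ⟨ht.1, ?_⟩, ht.2⟩
  intro u hu htu
  have hu' : u ∈ X.filter (fun u => s ⊆ u) := mem_filter.mpr ⟨hu, ht.2.trans htu⟩
  exact eq_of_subset_of_card_le htu (hmax u hu')

lemma cUnion_of_enum {X : Finset (Finset V)} (hX : IsComplex X) {m : ℕ} {σ : ℕ → Finset V}
    (he : IsFacetEnum X m σ) : cUnion σ m = X := by
  ext s
  rw [cUnion, mem_biUnion]
  constructor
  · rintro ⟨i, hi, hsi⟩
    have := he.1 i (mem_range.mp hi)
    rw [facetsOf, mem_filter] at this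
    exact hX _ this.1 s (mem_powerset.mp hsi)
  · intro hs
    obtain ⟨t, htf, hst⟩ := exists_facet hs
    obtain ⟨i, hi, hσi⟩ := he.2.1 t htf
    exact ⟨i, mem_range.mpr hi, mem_powerset.mpr (hσi ▸ hst)⟩

lemma exists_enum {X : Finset (Finset V)} (h : (facetsOf X).Nonempty) :
    ∃ m σ, 0 < m ∧ IsFacetEnum X m σ := by
  classical
  set l := (facetsOf X).toList with hl
  refine ⟨l.length, fun i => l.getD i ∅, ?_, ?_, ?_, ?_⟩
  · rw [hl, Finset.length_toList]
    exact card_pos.mpr h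
  · intro i hi
    show l.getD i ∅ ∈ facetsOf X
    rw [List.getD_eq_getElem l ∅ hi]
    have : l[i] ∈ l := List.getElem_mem _
    exact Finset.mem_toList.mp this
  · intro s hs
    have : s ∈ l := Finset.mem_toList.mpr hs
    obtain ⟨i, hi, hgi⟩ := List.mem_iff_getElem.mp this
    exact ⟨i, hi, by show l.getD i ∅ = s; rw [List.getD_eq_getElem l ∅ hi, hgi]⟩
  · intro i j hi hj hij
    have hij' : l.getD i ∅ = l.getD j ∅ := hij
    rw [List.getD_eq_getElem l ∅ hi, List.getD_eq_getElem l ∅ hj] at hij'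
    have hnd : l.Nodup := Finset.nodup_toList _
    exact (List.Nodup.getElem_inj_iff hnd).mp hij'

/-- `L(X) ≤ M(X)` for every complex with at least one facet. -/
theorem leray_le_M (X : Finset (Finset V)) (hX : IsComplex X)
    (h : (facetsOf X).Nonempty) :
    lerayNum X ≤ Mnum X := by
  have hSne : {k | ∃ m σ, 0 < m ∧ IsFacetEnum X m σ ∧ k = Mval σ (m - 1)}.Nonempty := by
    obtain ⟨m, σ, hm, he⟩ := exists_enum h
    exact ⟨Mval σ (m - 1), m, σ, hm, he, rfl⟩
  obtain ⟨m, σ, hm, he, hk⟩ := Nat.sInf_mem hSne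
  have hL : IsLeray X (Mval σ (m - 1)) := by
    have h1 := leray_cUnion σ (m - 1)
    have h2 : m - 1 + 1 = m := by omega
    rw [h2, cUnion_of_enum hX he] at h1
    exact h1
  have : IsLeray X (Mnum X) := by rw [Mnum, hk]; exact hL
  exact Nat.sInf_le this
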